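/- Let X = {0,1}^ℤ be the full 2-shift, X̂ the associated Kalikow-type subshift, and for p ∈ (0,1) let μ_p = (B_p × B_{1/2}) ∘ π^{−1}, where B_p is the Bernoulli(p,1−p) product measure on {−1,1}^ℤ (P(w_j = +1) = p) and B_{1/2} is the Bernoulli(1/2,1/2) product measure on {0,1}^ℤ. Then the Kolmogorov–Sinai entropy of the shift on X̂ with respect to μ_p equals |2p−1|·log 2 + H(p), where H(p) = −p log p − (1−p) log(1−p). -/

import Mathlib

/-!
STATEMENT 11: For `X = {0,1}^ℤ` and `μ_p = (B_p × B_{1/2}) ∘ π^{−1}` on the associated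
Kalikow-type subshift, the Kolmogorov–Sinai entropy of the shift with respect to `μ_p`
equals `|2p−1|·log 2 + H(p)`, with `H(p) = −p log p − (1−p) log (1−p)`.
(The entropy is the limit of `(1/n) H_μ(cylinders of length n)`.)
-/

open MeasureTheory Filter

namespace PaperStmt

noncomputable def walk (w : ℤ → ℤ) (n : ℤ) : ℤ :=
  if 0 ≤ n then ∑ j ∈ Finset.Ico (0 : ℤ) n, w j else -∑ j ∈ Finset.Ico n (0 : ℤ), w j

noncomputable def kalikowPi {A : Type*} (w : ℤ → ℤ) (y : ℤ → A) : ℤ → ℤ × A :=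
  fun n => (w n, y (walk w n))

def wordCyl {A : Type*} {n : ℕ} (a : Fin n → A) : Set (ℤ → A) :=
  {x | ∀ i : Fin n, x ((i : ℕ) : ℤ) = a i}

noncomputable section

def wgt (p : ℝ) (x : ℤ) : ℝ := if x = 1 then p else 1 - p

def TT (n : ℕ) : Finset (Fin n → ℤ) := Fintype.piFinset fun _ => ({1, -1} : Finset ℤ)

def qw (p : ℝ) {n : ℕ} (ε : Fin n → ℤ) : ℝ := ∏ i, wgt p (ε i)

def ext' {n : ℕ} (ε : Fin n → ℤ) (j : ℕ) : ℤ := if h : j < n then ε ⟨j, h⟩ else 1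

def pos' {n : ℕ} (ε : Fin n → ℤ) (k : ℕ) : ℤ := ∑ j ∈ Finset.range k, ext' ε j

def sites {n : ℕ} (ε : Fin n → ℤ) : Finset ℤ := (Finset.range n).image (pos' ε)

def Rng {n : ℕ} (ε : Fin n → ℤ) : ℕ := (sites ε).card

def En (p : ℝ) (n : ℕ) : ℝ := ∑ ε ∈ TT n, qw p ε * (Rng ε : ℝ)

variable {p : ℝ} {n : ℕ}

lemma mem_TT {ε : Fin n → ℤ} : ε ∈ TT n ↔ ∀ i, ε i = 1 ∨ ε i = -1 := by
  simp [TT, Fintype.mem_piFinset]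

lemma wgt_one : wgt p 1 = p := by simp [wgt]
lemma wgt_negone : wgt p (-1) = 1 - p := by simp [wgt]

lemma wgt_nonneg (hp0 : 0 < p) (hp1 : p < 1) (x : ℤ) : 0 ≤ wgt p x := by
  unfold wgt; split <;> linarith

lemma qw_nonneg (hp0 : 0 < p) (hp1 : p < 1) (ε : Fin n → ℤ) : 0 ≤ qw p ε :=
  Finset.prod_nonneg fun i _ => wgt_nonneg hp0 hp1 _

lemma E_prod (g : Fin n → ℤ → ℝ) :
    ∑ ε ∈ TT n, ∏ i, (wgt p (ε i) * g i (ε i)) =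
      ∏ i, (p * g i 1 + (1 - p) * g i (-1)) := by
  rw [TT, ← Finset.prod_univ_sum (fun _ => ({1,-1} : Finset ℤ)) (fun i x => wgt p x * g i x)]
  refine Finset.prod_congr rfl fun i _ => ?_
  rw [Finset.sum_pair (by decide : (1 : ℤ) ≠ -1), wgt_one, wgt_negone]

lemma sum_qw : ∑ ε ∈ TT n, qw p ε = 1 := by
  have := E_prod (p := p) (n := n) (fun _ _ => 1)
  simpa [qw] using this

lemma E_single (i : Fin n) (c : ℤ → ℝ) :
    ∑ ε ∈ TT n, qw p ε * c (ε i) = p * c 1 + (1 - p) * c (-1) := by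
  have h := E_prod (p := p) (n := n) (fun k x => if k = i then c x else 1)
  have l1 : ∀ ε : Fin n → ℤ,
      ∏ k, (wgt p (ε k) * (if k = i then c (ε k) else 1)) = qw p ε * c (ε i) := by
    intro ε
    rw [Finset.prod_mul_distrib]
    congr 1
    simp [Finset.prod_ite_eq']
  have l2 : ∏ k, (p * (if k = i then c 1 else 1) + (1 - p) * (if k = i then c (-1) else 1))
      = p * c 1 + (1 - p) * c (-1) := by
    rw [Finset.prod_eq_single i] <;> simp +contextual
  rw [← l2, ← h]
  exact Finset.sum_congr rfl fun ε _ => (l1 ε).symm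

lemma E_pair (i j : Fin n) (hij : i ≠ j) (c d : ℤ → ℝ) :
    ∑ ε ∈ TT n, qw p ε * (c (ε i) * d (ε j)) =
      (p * c 1 + (1 - p) * c (-1)) * (p * d 1 + (1 - p) * d (-1)) := by
  have h := E_prod (p := p) (n := n)
    (fun k x => if k = i then c x else if k = j then d x else 1)
  have l1 : ∀ ε : Fin n → ℤ,
      ∏ k, (wgt p (ε k) * (if k = i then c (ε k) else if k = j then d (ε k) else 1))
        = qw p ε * (c (ε i) * d (ε j)) := by
    intro ε
    rw [Finset.prod_mul_distrib]
    congr 1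
    rw [← Finset.prod_erase_mul _ _ (Finset.mem_univ i), if_pos rfl]
    rw [← Finset.prod_erase_mul _ _ (Finset.mem_erase.2 ⟨Ne.symm hij, Finset.mem_univ j⟩)]
    rw [if_neg hij.symm, if_pos rfl]
    rw [Finset.prod_eq_one, one_mul, mul_comm]
    intro k hk
    simp only [Finset.mem_erase] at hk
    rw [if_neg hk.2.1, if_neg hk.1]
  have l2 : ∏ k, (p * (if k = i then c 1 else if k = j then d 1 else 1)
        + (1 - p) * (if k = i then c (-1) else if k = j then d (-1) else 1))
      = (p * c 1 + (1 - p) * c (-1)) * (p * d 1 + (1 - p) * d (-1)) := by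
    rw [← Finset.prod_erase_mul _ _ (Finset.mem_univ i), if_pos rfl, if_pos rfl]
    rw [← Finset.prod_erase_mul _ _ (Finset.mem_erase.2 ⟨Ne.symm hij, Finset.mem_univ j⟩)]
    rw [if_neg hij.symm, if_pos rfl, if_neg hij.symm, if_pos rfl]
    rw [Finset.prod_eq_one, one_mul, mul_comm]
    intro k hk
    simp only [Finset.mem_erase] at hk
    rw [if_neg hk.2.1, if_neg hk.1, if_neg hk.2.1, if_neg hk.1]
    ring
  rw [← l2, ← h]
  exact Finset.sum_congr rfl fun ε _ => (l1 ε).symm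


lemma pos'_succ (ε : Fin n → ℤ) (k : ℕ) : pos' ε (k+1) = pos' ε k + ext' ε k :=
  Finset.sum_range_succ _ _

lemma E_single_nat (k : ℕ) (hk : k < n) (c : ℤ → ℝ) :
    ∑ ε ∈ TT n, qw p ε * c (ext' ε k) = p * c 1 + (1 - p) * c (-1) := by
  rw [← E_single (p := p) ⟨k, hk⟩ c]
  refine Finset.sum_congr rfl fun ε _ => ?_
  rw [ext', dif_pos hk]

lemma cov (k k' : ℕ) (hk : k < n) (hk' : k' < n) :
    ∑ ε ∈ TT n, qw p ε *
      (((ext' ε k : ℝ) - (2*p-1)) * ((ext' ε k' : ℝ) - (2*p-1)))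
      = if k = k' then 4*p*(1-p) else 0 := by
  rcases eq_or_ne k k' with h | h
  · subst h
    rw [if_pos rfl]
    have := E_single_nat (p := p) k hk (fun x => ((x:ℝ) - (2*p-1)) * ((x:ℝ) - (2*p-1)))
    rw [this]
    push_cast
    ring
  · rw [if_neg h]
    have hne : (⟨k, hk⟩ : Fin n) ≠ ⟨k', hk'⟩ := by simp [Fin.mk.injEq, h]
    have h2 := E_pair (p := p) ⟨k, hk⟩ ⟨k', hk'⟩ hne
      (fun x => (x:ℝ) - (2*p-1)) (fun x => (x:ℝ) - (2*p-1))
    have e1 : ∀ ε : Fin n → ℤ, ((ext' ε k : ℝ) - (2*p-1)) * ((ext' ε k' : ℝ) - (2*p-1))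
        = ((ε ⟨k, hk⟩ : ℝ) - (2*p-1)) * ((ε ⟨k', hk'⟩ : ℝ) - (2*p-1)) := by
      intro ε; rw [ext', ext', dif_pos hk, dif_pos hk']
    calc ∑ ε ∈ TT n, qw p ε *
          (((ext' ε k : ℝ) - (2*p-1)) * ((ext' ε k' : ℝ) - (2*p-1)))
        = ∑ ε ∈ TT n, qw p ε *
          (((ε ⟨k, hk⟩ : ℝ) - (2*p-1)) * ((ε ⟨k', hk'⟩ : ℝ) - (2*p-1))) :=
          Finset.sum_congr rfl fun ε _ => by rw [e1]
      _ = _ := h2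
      _ = 0 := by push_cast; ring

lemma Esq (hp0 : 0 < p) (hp1 : p < 1) (I : Finset ℕ) (hI : ∀ t ∈ I, t < n) :
    ∑ ε ∈ TT n, qw p ε * (∑ t ∈ I, ((ext' ε t : ℝ) - (2*p-1)))^2 ≤ I.card := by
  have step1 : ∀ ε : Fin n → ℤ, qw p ε * (∑ t ∈ I, ((ext' ε t : ℝ) - (2*p-1)))^2
      = ∑ t ∈ I, ∑ t' ∈ I, qw p ε *
          (((ext' ε t : ℝ) - (2*p-1)) * ((ext' ε t' : ℝ) - (2*p-1))) := by
    intro ε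
    rw [pow_two, Finset.sum_mul_sum]
    rw [Finset.mul_sum]
    exact Finset.sum_congr rfl fun t _ => by rw [Finset.mul_sum]
  calc ∑ ε ∈ TT n, qw p ε * (∑ t ∈ I, ((ext' ε t : ℝ) - (2*p-1)))^2
      = ∑ ε ∈ TT n, ∑ t ∈ I, ∑ t' ∈ I, qw p ε *
          (((ext' ε t : ℝ) - (2*p-1)) * ((ext' ε t' : ℝ) - (2*p-1))) :=
        Finset.sum_congr rfl fun ε _ => step1 ε
    _ = ∑ t ∈ I, ∑ ε ∈ TT n, ∑ t' ∈ I, qw p ε *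
          (((ext' ε t : ℝ) - (2*p-1)) * ((ext' ε t' : ℝ) - (2*p-1))) := Finset.sum_comm
    _ = ∑ t ∈ I, ∑ t' ∈ I, ∑ ε ∈ TT n, qw p ε *
          (((ext' ε t : ℝ) - (2*p-1)) * ((ext' ε t' : ℝ) - (2*p-1))) :=
        Finset.sum_congr rfl fun t _ => Finset.sum_comm
    _ = ∑ t ∈ I, ∑ t' ∈ I, (if t = t' then 4*p*(1-p) else 0) :=
        Finset.sum_congr rfl fun t ht => Finset.sum_congr rfl fun t' ht' =>
          cov t t' (hI t ht) (hI t' ht')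
    _ = ∑ t ∈ I, (4*p*(1-p)) := Finset.sum_congr rfl fun t ht => by
          rw [Finset.sum_ite_eq I t (fun _ => 4*p*(1-p)), if_pos ht]
    _ = I.card * (4*p*(1-p)) := by rw [Finset.sum_const, nsmul_eq_mul]
    _ ≤ I.card := by nlinarith [sq_nonneg (2*p-1), Nat.cast_nonneg (α := ℝ) I.card]

lemma E_abs_le (hp0 : 0 < p) (hp1 : p < 1) (X : (Fin n → ℤ) → ℝ) (C : ℝ) (hC : 0 ≤ C)
    (hX : ∑ ε ∈ TT n, qw p ε * (X ε)^2 ≤ C) :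
    ∑ ε ∈ TT n, qw p ε * |X ε| ≤ Real.sqrt C := by
  have cs := Finset.sum_mul_sq_le_sq_mul_sq (TT n)
    (fun ε => Real.sqrt (qw p ε)) (fun ε => Real.sqrt (qw p ε) * |X ε|)
  have e1 : ∀ ε : Fin n → ℤ, Real.sqrt (qw p ε) * (Real.sqrt (qw p ε) * |X ε|)
      = qw p ε * |X ε| := by
    intro ε; rw [← mul_assoc, Real.mul_self_sqrt (qw_nonneg hp0 hp1 ε)]
  have e2 : ∀ ε : Fin n → ℤ, (Real.sqrt (qw p ε))^2 = qw p ε :=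
    fun ε => Real.sq_sqrt (qw_nonneg hp0 hp1 ε)
  have e3 : ∀ ε : Fin n → ℤ, (Real.sqrt (qw p ε) * |X ε|)^2 = qw p ε * (X ε)^2 := by
    intro ε; rw [mul_pow, e2, sq_abs]
  rw [Finset.sum_congr rfl fun ε _ => e1 ε, Finset.sum_congr rfl fun ε _ => e2 ε,
    Finset.sum_congr rfl fun ε _ => e3 ε, sum_qw, one_mul] at cs
  have hnn : 0 ≤ ∑ ε ∈ TT n, qw p ε * |X ε| :=
    Finset.sum_nonneg fun ε _ => mul_nonneg (qw_nonneg hp0 hp1 ε) (abs_nonneg _)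
  have := le_trans cs hX
  nlinarith [Real.sq_sqrt hC, Real.sqrt_nonneg C]


lemma E_absDelta (hp0 : 0 < p) (hp1 : p < 1) (a b : ℕ) (hab : a ≤ b) (hb : b ≤ n) :
    ∑ ε ∈ TT n, qw p ε * |∑ t ∈ Finset.Ico a b, (ext' ε t : ℝ)|
      ≤ ((b : ℝ) - a) * |2*p-1| + Real.sqrt ((b : ℝ) - a) := by
  set m : ℝ := 2*p-1 with hm
  have key : ∀ ε : Fin n → ℤ, |∑ t ∈ Finset.Ico a b, (ext' ε t : ℝ)|
      ≤ |∑ t ∈ Finset.Ico a b, ((ext' ε t : ℝ) - m)| + ((b:ℝ) - a) * |m| := by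
    intro ε
    have : ∑ t ∈ Finset.Ico a b, (ext' ε t : ℝ)
        = (∑ t ∈ Finset.Ico a b, ((ext' ε t : ℝ) - m)) + ((b:ℝ) - a) * m := by
      rw [Finset.sum_sub_distrib, Finset.sum_const, Nat.card_Ico, nsmul_eq_mul]
      push_cast [Nat.cast_sub hab]
      ring
    rw [this]
    calc |(∑ t ∈ Finset.Ico a b, ((ext' ε t : ℝ) - m)) + ((b:ℝ) - a) * m|
        ≤ |∑ t ∈ Finset.Ico a b, ((ext' ε t : ℝ) - m)| + |((b:ℝ) - a) * m| := abs_add_le _ _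
      _ = _ := by rw [abs_mul, abs_of_nonneg (sub_nonneg.mpr (Nat.cast_le.mpr hab : (a:ℝ) ≤ b))]
  have step : ∑ ε ∈ TT n, qw p ε * |∑ t ∈ Finset.Ico a b, (ext' ε t : ℝ)|
      ≤ (∑ ε ∈ TT n, qw p ε * |∑ t ∈ Finset.Ico a b, ((ext' ε t : ℝ) - m)|)
        + ((b:ℝ) - a) * |m| := by
    have := Finset.sum_le_sum (s := TT n)
      (f := fun ε => qw p ε * |∑ t ∈ Finset.Ico a b, (ext' ε t : ℝ)|)
      (g := fun ε => qw p ε * (|∑ t ∈ Finset.Ico a b, ((ext' ε t : ℝ) - m)|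
        + ((b:ℝ) - a) * |m|))
      (fun ε _ => mul_le_mul_of_nonneg_left (key ε) (qw_nonneg hp0 hp1 ε))
    refine this.trans (le_of_eq ?_)
    rw [Finset.sum_congr rfl fun ε _ => mul_add (qw p ε) _ _, Finset.sum_add_distrib,
      ← Finset.sum_mul, sum_qw, one_mul]
  refine step.trans ?_
  have hEsq := Esq (p := p) (n := n) hp0 hp1 (Finset.Ico a b) (fun t ht => by
    have := (Finset.mem_Ico.mp ht).2; omega)
  rw [Nat.card_Ico] at hEsq
  have h2 : ∑ ε ∈ TT n, qw p ε * |∑ t ∈ Finset.Ico a b, ((ext' ε t : ℝ) - m)|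
      ≤ Real.sqrt ((b - a : ℕ) : ℝ) :=
    E_abs_le hp0 hp1 (fun ε => ∑ t ∈ Finset.Ico a b, ((ext' ε t : ℝ) - m))
      ((b - a : ℕ) : ℝ) (Nat.cast_nonneg _) hEsq
  have hcast : (((b - a : ℕ)) : ℝ) = (b:ℝ) - a := by push_cast [Nat.cast_sub hab]; ring
  rw [hcast] at h2
  linarith

lemma ivt {ε : Fin n → ℤ} (hε : ε ∈ TT n) :
    ∀ k, k < n → ∀ z : ℤ, ((0 ≤ z ∧ z ≤ pos' ε k) ∨ (pos' ε k ≤ z ∧ z ≤ 0)) →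
      ∃ j, j < n ∧ pos' ε j = z := by
  intro k
  induction k with
  | zero =>
    intro hk z hz
    refine ⟨0, hk, ?_⟩
    have : pos' ε 0 = 0 := by simp [pos']
    rw [this] at hz ⊢
    omega
  | succ k ih =>
    intro hk z hz
    have hkn : k < n := Nat.lt_of_succ_lt hk
    have hx : ext' ε k = 1 ∨ ext' ε k = -1 := by
      rw [ext', dif_pos hkn]; exact mem_TT.mp hε _
    rw [pos'_succ] at hz
    have htri : (0 ≤ z ∧ z ≤ pos' ε k) ∨ (pos' ε k ≤ z ∧ z ≤ 0)
        ∨ z = pos' ε k + ext' ε k := by omega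
    rcases htri with h | h | h
    · exact ih hkn z (Or.inl h)
    · exact ih hkn z (Or.inr h)
    · exact ⟨k + 1, hk, by rw [pos'_succ, h]⟩

lemma Rng_ge {ε : Fin n → ℤ} (hε : ε ∈ TT n) (hn : 1 ≤ n) :
    |pos' ε (n-1)| ≤ (Rng ε : ℤ) := by
  set P : ℤ := pos' ε (n-1) with hP
  have hsub : Finset.Icc (min 0 P) (max 0 P) ⊆ sites ε := by
    intro z hz
    rw [Finset.mem_Icc] at hz
    have hz' : (0 ≤ z ∧ z ≤ P) ∨ (P ≤ z ∧ z ≤ 0) := by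
      rcases le_total (0:ℤ) P with h | h
      · rw [min_eq_left h, max_eq_right h] at hz; exact Or.inl hz
      · rw [min_eq_right h, max_eq_left h] at hz; exact Or.inr hz
    obtain ⟨j, hj, hjz⟩ := ivt hε (n-1) (by omega) z hz'
    exact Finset.mem_image.mpr ⟨j, Finset.mem_range.mpr hj, hjz⟩
  have hcard := Finset.card_le_card hsub
  rw [Int.card_Icc] at hcard
  have h1 : max 0 P + 1 - min 0 P = |P| + 1 := by
    rcases le_total (0:ℤ) P with h | h
    · rw [min_eq_left h, max_eq_right h, abs_of_nonneg h]; ring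
    · rw [min_eq_right h, max_eq_left h, abs_of_nonpos h]; ring
  rw [h1] at hcard
  have h2 : ((|P| + 1).toNat : ℤ) = |P| + 1 := Int.toNat_of_nonneg (by positivity)
  have := (Int.ofNat_le.mpr hcard : ((|P| + 1).toNat : ℤ) ≤ (Rng ε : ℤ))
  omega


lemma ext'_abs {ε : Fin n → ℤ} (hε : ε ∈ TT n) {t : ℕ} (ht : t < n) : |ext' ε t| = 1 := by
  rw [ext', dif_pos ht]
  rcases mem_TT.mp hε ⟨t, ht⟩ with h | h <;> rw [h] <;> decide

lemma pos'_diff {ε : Fin n → ℤ} (a b : ℕ) (hab : a ≤ b) :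
    pos' ε b - pos' ε a = ∑ t ∈ Finset.Ico a b, ext' ε t := by
  rw [Finset.sum_Ico_eq_sub _ hab]; rfl

lemma pos'_step {ε : Fin n → ℤ} (hε : ε ∈ TT n) {a b : ℕ} (hab : a ≤ b) (hb : b ≤ n) :
    |pos' ε b - pos' ε a| ≤ (b : ℤ) - a := by
  rw [pos'_diff a b hab]
  calc |∑ t ∈ Finset.Ico a b, ext' ε t| ≤ ∑ t ∈ Finset.Ico a b, |ext' ε t| :=
        Finset.abs_sum_le_sum_abs _ _
    _ = ∑ t ∈ Finset.Ico a b, 1 := Finset.sum_congr rfl fun t ht => by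
        rw [ext'_abs hε (lt_of_lt_of_le (Finset.mem_Ico.mp ht).2 hb)]
    _ = (b : ℤ) - a := by rw [Finset.sum_const, Nat.card_Ico]; simp [Nat.cast_sub hab]

lemma Rng_le {ε : Fin n → ℤ} (hε : ε ∈ TT n) (hn : 1 ≤ n) (L : ℕ) (hL : 1 ≤ L) :
    (Rng ε : ℤ) ≤ (∑ j ∈ Finset.range ((n-1)/L), |pos' ε ((j+1)*L) - pos' ε (j*L)|)
      + 2*L + 1 := by
  set B : ℕ := (n-1)/L with hB
  set D : ℕ → ℤ := fun j => pos' ε ((j+1)*L) - pos' ε (j*L) with hD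
  set hi : ℤ := (∑ j ∈ Finset.range B, max (D j) 0) + L with hhi
  set lo : ℤ := -((∑ j ∈ Finset.range B, max (-(D j)) 0) + L) with hlo
  have pos_tele : ∀ t : ℕ, pos' ε (t*L) = ∑ j ∈ Finset.range t, D j := by
    intro t
    rw [hD, Finset.sum_range_sub (fun j => pos' ε (j*L))]
    simp [pos']
  have hbound : ∀ k, k < n → lo ≤ pos' ε k ∧ pos' ε k ≤ hi := by
    intro k hk
    obtain ⟨t, htB, htL, hkt⟩ : ∃ t, t ≤ B ∧ t * L ≤ k ∧ k - t * L < L := by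
      refine ⟨k / L, Nat.div_le_div_right (by omega), Nat.div_mul_le_self k L, ?_⟩
      have h1 := Nat.mod_lt k (show 0 < L by omega)
      have h2 := Nat.div_add_mod k L
      rw [mul_comm]
      omega
    have hstep := pos'_step hε htL (le_of_lt hk)
    have h1 : ∑ j ∈ Finset.range t, D j ≤ ∑ j ∈ Finset.range B, max (D j) 0 := by
      calc ∑ j ∈ Finset.range t, D j ≤ ∑ j ∈ Finset.range t, max (D j) 0 :=
            Finset.sum_le_sum fun j _ => le_max_left _ _
        _ ≤ ∑ j ∈ Finset.range B, max (D j) 0 :=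
            Finset.sum_le_sum_of_subset_of_nonneg
              (Finset.range_subset_range.mpr htB) (fun j _ _ => le_max_right _ _)
    have h2 : -(∑ j ∈ Finset.range B, max (-(D j)) 0) ≤ ∑ j ∈ Finset.range t, D j := by
      have : ∀ j, -(max (-(D j)) 0) ≤ D j := fun j => by
        rcases le_max_left (-(D j)) 0 with _; omega
      calc -(∑ j ∈ Finset.range B, max (-(D j)) 0)
          ≤ -(∑ j ∈ Finset.range t, max (-(D j)) 0) := by
            apply neg_le_neg
            exact Finset.sum_le_sum_of_subset_of_nonneg
              (Finset.range_subset_range.mpr htB) (fun j _ _ => le_max_right _ _)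
        _ = ∑ j ∈ Finset.range t, -(max (-(D j)) 0) := by rw [← Finset.sum_neg_distrib]
        _ ≤ ∑ j ∈ Finset.range t, D j := Finset.sum_le_sum fun j _ => this j
    have habs : |pos' ε k - pos' ε (t*L)| ≤ (L : ℤ) := by
      have hc : (k : ℤ) - ((t*L : ℕ) : ℤ) ≤ (L : ℤ) := by omega
      exact le_trans hstep hc
    rw [pos_tele] at habs
    have habs' := abs_le.mp habs
    constructor
    · rw [hlo]; omega
    · rw [hhi]; omega
  have hsub : sites ε ⊆ Finset.Icc lo hi := by
    intro z hz
    obtain ⟨k, hk, hkz⟩ := Finset.mem_image.mp hz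
    rw [Finset.mem_range] at hk
    rw [Finset.mem_Icc, ← hkz]
    exact ⟨(hbound k hk).1, (hbound k hk).2⟩
  have hcard := Finset.card_le_card hsub
  rw [Int.card_Icc] at hcard
  have hval : hi + 1 - lo = (∑ j ∈ Finset.range B, |D j|) + 2*L + 1 := by
    rw [hhi, hlo]
    have : ∀ j, max (D j) 0 + max (-(D j)) 0 = |D j| := by
      intro j
      rcases le_total (D j) 0 with h | h
      · rw [max_eq_right h, max_eq_left (by omega), abs_of_nonpos h]; ring
      · rw [max_eq_left h, max_eq_right (by omega), abs_of_nonneg h]; ring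
    have hsum : ∑ j ∈ Finset.range B, |D j|
        = (∑ j ∈ Finset.range B, max (D j) 0) + ∑ j ∈ Finset.range B, max (-(D j)) 0 := by
      rw [← Finset.sum_add_distrib]
      exact Finset.sum_congr rfl fun j _ => (this j).symm
    rw [hsum]; ring
  rw [hval] at hcard
  have hnn : (0:ℤ) ≤ (∑ j ∈ Finset.range B, |D j|) + 2*L + 1 := by
    have : (0:ℤ) ≤ ∑ j ∈ Finset.range B, |D j| :=
      Finset.sum_nonneg fun j _ => abs_nonneg _
    positivity
  have := (Int.ofNat_le.mpr hcard : ((Rng ε : ℕ) : ℤ) ≤ _)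
  rw [Int.toNat_of_nonneg hnn] at this
  exact this


lemma En_lower (hp0 : 0 < p) (hp1 : p < 1) (hn : 1 ≤ n) :
    ((n:ℝ) - 1) * |2*p-1| ≤ En p n := by
  have h1 : ∀ ε ∈ TT n, qw p ε * |(pos' ε (n-1) : ℝ)| ≤ qw p ε * (Rng ε : ℝ) := by
    intro ε hε
    refine mul_le_mul_of_nonneg_left ?_ (qw_nonneg hp0 hp1 ε)
    have := Rng_ge hε hn
    calc |(pos' ε (n-1) : ℝ)| = ((|pos' ε (n-1)| : ℤ) : ℝ) := by rw [Int.cast_abs]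
      _ ≤ ((Rng ε : ℤ) : ℝ) := Int.cast_le.mpr this
      _ = (Rng ε : ℝ) := by push_cast; ring
  have h2 : ∑ ε ∈ TT n, qw p ε * |(pos' ε (n-1) : ℝ)| ≤ En p n :=
    Finset.sum_le_sum h1
  have h3 : |∑ ε ∈ TT n, qw p ε * (pos' ε (n-1) : ℝ)|
      ≤ ∑ ε ∈ TT n, qw p ε * |(pos' ε (n-1) : ℝ)| := by
    calc |∑ ε ∈ TT n, qw p ε * (pos' ε (n-1) : ℝ)|
        ≤ ∑ ε ∈ TT n, |qw p ε * (pos' ε (n-1) : ℝ)| := Finset.abs_sum_le_sum_abs _ _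
      _ = ∑ ε ∈ TT n, qw p ε * |(pos' ε (n-1) : ℝ)| := Finset.sum_congr rfl fun ε hε => by
          rw [abs_mul, abs_of_nonneg (qw_nonneg hp0 hp1 ε)]
  have h4 : ∑ ε ∈ TT n, qw p ε * (pos' ε (n-1) : ℝ) = ((n:ℝ) - 1) * (2*p-1) := by
    have e1 : ∀ ε : Fin n → ℤ, (pos' ε (n-1) : ℝ)
        = ∑ j ∈ Finset.range (n-1), (ext' ε j : ℝ) := by
      intro ε; rw [pos']; push_cast; ring
    calc ∑ ε ∈ TT n, qw p ε * (pos' ε (n-1) : ℝ)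
        = ∑ ε ∈ TT n, ∑ j ∈ Finset.range (n-1), qw p ε * (ext' ε j : ℝ) :=
          Finset.sum_congr rfl fun ε _ => by rw [e1, Finset.mul_sum]
      _ = ∑ j ∈ Finset.range (n-1), ∑ ε ∈ TT n, qw p ε * (ext' ε j : ℝ) := Finset.sum_comm
      _ = ∑ j ∈ Finset.range (n-1), (2*p-1) := Finset.sum_congr rfl fun j hj => by
          have hjn : j < n := by have := Finset.mem_range.mp hj; omega
          have := E_single_nat (p := p) j hjn (fun x => (x:ℝ))
          rw [this]; push_cast; ring
      _ = ((n:ℝ) - 1) * (2*p-1) := by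
          rw [Finset.sum_const, Finset.card_range, nsmul_eq_mul, Nat.cast_sub hn]
          push_cast; ring
  have hn' : (0:ℝ) ≤ (n:ℝ) - 1 := by
    have : (1:ℝ) ≤ (n:ℝ) := by exact_mod_cast hn
    linarith
  calc ((n:ℝ) - 1) * |2*p-1| = |((n:ℝ) - 1) * (2*p-1)| := by
        rw [abs_mul, abs_of_nonneg hn']
    _ = |∑ ε ∈ TT n, qw p ε * (pos' ε (n-1) : ℝ)| := by rw [h4]
    _ ≤ ∑ ε ∈ TT n, qw p ε * |(pos' ε (n-1) : ℝ)| := h3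
    _ ≤ En p n := h2

lemma En_upper (hp0 : 0 < p) (hp1 : p < 1) (hn : 1 ≤ n) (L : ℕ) (hL : 1 ≤ L) :
    En p n ≤ (n:ℝ) * |2*p-1| + (n:ℝ) / Real.sqrt L + (2*(L:ℝ) + 1) := by
  set B : ℕ := (n-1)/L with hB
  have hLpos : (0:ℝ) < L := by exact_mod_cast hL
  have hsL : (0:ℝ) < Real.sqrt L := Real.sqrt_pos.mpr hLpos
  have habL : ∀ j : ℕ, j*L ≤ (j+1)*L := fun j => Nat.mul_le_mul_right L (Nat.le_succ j)
  -- pointwise bound, cast to ℝ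
  have hpt : ∀ ε ∈ TT n, qw p ε * (Rng ε : ℝ) ≤ qw p ε *
      ((∑ j ∈ Finset.range B, |∑ t ∈ Finset.Ico (j*L) ((j+1)*L), (ext' ε t : ℝ)|)
        + (2*(L:ℝ) + 1)) := by
    intro ε hε
    refine mul_le_mul_of_nonneg_left ?_ (qw_nonneg hp0 hp1 ε)
    have h := Rng_le hε hn L hL
    have e : ∀ j ∈ Finset.range B, |(pos' ε ((j+1)*L) : ℝ) - (pos' ε (j*L) : ℝ)|
        = |∑ t ∈ Finset.Ico (j*L) ((j+1)*L), (ext' ε t : ℝ)| := by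
      intro j _
      rw [← Int.cast_sub, pos'_diff (j*L) ((j+1)*L) (habL j)]
      push_cast
      ring
    have hcast : ((∑ j ∈ Finset.range B, |pos' ε ((j+1)*L) - pos' ε (j*L)| + 2*(L:ℤ) + 1 : ℤ) : ℝ)
        = (∑ j ∈ Finset.range B, |∑ t ∈ Finset.Ico (j*L) ((j+1)*L), (ext' ε t : ℝ)|)
          + (2*(L:ℝ) + 1) := by
      push_cast
      rw [Finset.sum_congr rfl e]
      ring
    calc (Rng ε : ℝ) = ((Rng ε : ℤ) : ℝ) := by push_cast; ring
      _ ≤ ((∑ j ∈ Finset.range B, |pos' ε ((j+1)*L) - pos' ε (j*L)| + 2*(L:ℤ) + 1 : ℤ) : ℝ) :=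
          Int.cast_le.mpr h
      _ = _ := hcast
  have hs1 : En p n ≤ (∑ j ∈ Finset.range B,
      ∑ ε ∈ TT n, qw p ε * |∑ t ∈ Finset.Ico (j*L) ((j+1)*L), (ext' ε t : ℝ)|)
        + (2*(L:ℝ) + 1) := by
    calc En p n ≤ ∑ ε ∈ TT n, qw p ε *
        ((∑ j ∈ Finset.range B, |∑ t ∈ Finset.Ico (j*L) ((j+1)*L), (ext' ε t : ℝ)|)
          + (2*(L:ℝ) + 1)) := Finset.sum_le_sum hpt
      _ = (∑ ε ∈ TT n, ∑ j ∈ Finset.range B,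
            qw p ε * |∑ t ∈ Finset.Ico (j*L) ((j+1)*L), (ext' ε t : ℝ)|)
          + ∑ ε ∈ TT n, qw p ε * (2*(L:ℝ) + 1) := by
          rw [← Finset.sum_add_distrib]
          refine Finset.sum_congr rfl fun ε _ => ?_
          rw [mul_add, Finset.mul_sum]
      _ = _ := by
          rw [Finset.sum_comm, ← Finset.sum_mul, sum_qw, one_mul]
  have hblock : ∀ j ∈ Finset.range B,
      ∑ ε ∈ TT n, qw p ε * |∑ t ∈ Finset.Ico (j*L) ((j+1)*L), (ext' ε t : ℝ)|
        ≤ (L:ℝ) * |2*p-1| + Real.sqrt L := by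
    intro j hj
    have hjB : j < B := Finset.mem_range.mp hj
    have hub : (j+1)*L ≤ n := by
      have h2 : (j+1) * L ≤ B * L := Nat.mul_le_mul_right L hjB
      have h3 : B * L ≤ n - 1 := Nat.div_mul_le_self (n-1) L
      omega
    have := E_absDelta (p := p) (n := n) hp0 hp1 (j*L) ((j+1)*L) (habL j) hub
    have hval : (((j+1)*L : ℕ) : ℝ) - ((j*L : ℕ) : ℝ) = (L:ℝ) := by push_cast; ring
    rw [hval] at this
    exact this
  have hs2 : (∑ j ∈ Finset.range B,
      ∑ ε ∈ TT n, qw p ε * |∑ t ∈ Finset.Ico (j*L) ((j+1)*L), (ext' ε t : ℝ)|)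
        ≤ (B:ℝ) * ((L:ℝ) * |2*p-1| + Real.sqrt L) := by
    calc _ ≤ ∑ _j ∈ Finset.range B, ((L:ℝ) * |2*p-1| + Real.sqrt L) :=
          Finset.sum_le_sum hblock
      _ = (B:ℝ) * ((L:ℝ) * |2*p-1| + Real.sqrt L) := by
          rw [Finset.sum_const, Finset.card_range, nsmul_eq_mul]
  have hBle : (B:ℝ) ≤ (n:ℝ) / L := by
    calc (B:ℝ) ≤ ((n-1 : ℕ):ℝ) / (L:ℝ) := Nat.cast_div_le
      _ ≤ (n:ℝ) / L := by
          apply (div_le_div_iff_of_pos_right hLpos).mpr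
          exact_mod_cast Nat.sub_le n 1
  have hmul : (B:ℝ) * ((L:ℝ) * |2*p-1| + Real.sqrt L)
      ≤ (n:ℝ) / L * ((L:ℝ) * |2*p-1| + Real.sqrt L) := by
    apply mul_le_mul_of_nonneg_right hBle
    positivity
  have key : (n:ℝ)/L * ((L:ℝ)*|2*p-1| + Real.sqrt L) = (n:ℝ)*|2*p-1| + (n:ℝ)/Real.sqrt L := by
    have hLL : Real.sqrt L * Real.sqrt L = (L:ℝ) := Real.mul_self_sqrt (le_of_lt hLpos)
    field_simp
    nlinarith [hLL, hsL]
  linarith [hs1, hs2, hmul, le_of_eq key]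

lemma En_tendsto (hp0 : 0 < p) (hp1 : p < 1) :
    Tendsto (fun n : ℕ => En p n / n) atTop (nhds |2*p-1|) := by
  have habs1 : |2*p-1| ≤ 1 := by rw [abs_le]; constructor <;> linarith
  rw [Metric.tendsto_atTop]
  intro δ hδ
  obtain ⟨L, hLgt⟩ := exists_nat_gt (max 1 ((2/δ)^2))
  have hL1 : 1 ≤ L := by
    have h1 : (1:ℝ) < L := lt_of_le_of_lt (le_max_left _ _) hLgt
    exact_mod_cast h1.le
  have hLpos : (0:ℝ) < L := by exact_mod_cast hL1
  have hsL : (0:ℝ) < Real.sqrt L := Real.sqrt_pos.mpr hLpos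
  have h2δ : (0:ℝ) < 2/δ := by positivity
  have hsqrt : 1 / Real.sqrt L < δ/2 := by
    have h1 : (2/δ)^2 < L := lt_of_le_of_lt (le_max_right _ _) hLgt
    have h2 : 2/δ < Real.sqrt L := by
      have := Real.lt_sqrt (le_of_lt h2δ) (y := (L:ℝ))
      exact this.mpr h1
    have h3 : 1 / Real.sqrt L < 1 / (2/δ) := one_div_lt_one_div_of_lt h2δ h2
    rw [one_div_div] at h3
    linarith
  obtain ⟨N₀, hN₀⟩ := exists_nat_gt (max ((2*(L:ℝ)+1)*(2/δ)) (2/δ))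
  refine ⟨N₀ + 1, fun n hn => ?_⟩
  have hn1 : 1 ≤ n := le_trans (Nat.le_add_left 1 N₀) hn
  have hnR : ((N₀:ℝ)) < n := by
    have : N₀ < n := by omega
    exact_mod_cast this
  have hnbig : max ((2*(L:ℝ)+1)*(2/δ)) (2/δ) < (n:ℝ) := lt_trans hN₀ hnR
  have hnpos : (0:ℝ) < n := by
    have : (0:ℝ) ≤ max ((2*(L:ℝ)+1)*(2/δ)) (2/δ) := le_trans (le_of_lt h2δ) (le_max_right _ _)
    linarith
  have hup := En_upper (p := p) (n := n) hp0 hp1 hn1 L hL1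
  have hlo := En_lower (p := p) (n := n) hp0 hp1 hn1
  have hup' : En p n / n ≤ |2*p-1| + 1/Real.sqrt L + (2*(L:ℝ)+1)/n := by
    rw [div_le_iff₀ hnpos]
    have e : (|2*p-1| + 1/Real.sqrt L + (2*(L:ℝ)+1)/n) * n
        = (n:ℝ)*|2*p-1| + (n:ℝ)/Real.sqrt L + (2*(L:ℝ)+1) := by
      field_simp
    rw [e]
    exact hup
  have hlo' : |2*p-1| - 1/n ≤ En p n / n := by
    rw [le_div_iff₀ hnpos]
    have e : (|2*p-1| - 1/n) * n = (n:ℝ)*|2*p-1| - 1 := by field_simp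
    rw [e]
    have : ((n:ℝ)-1) * |2*p-1| ≥ (n:ℝ)*|2*p-1| - 1 := by nlinarith [abs_nonneg (2*p-1)]
    linarith
  have hterm1 : (2*(L:ℝ)+1)/n < δ/2 := by
    rw [div_lt_iff₀ hnpos]
    have h1 : (2*(L:ℝ)+1)*(2/δ) < n := lt_of_le_of_lt (le_max_left _ _) hnbig
    have h3 : (2*(L:ℝ)+1) * 2 / δ < n := by rw [mul_div_assoc]; exact h1
    have h4 := (div_lt_iff₀ hδ).mp h3
    linarith
  have hterm2 : 1/(n:ℝ) < δ/2 := by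
    have h1 : 2/δ < n := lt_of_le_of_lt (le_max_right _ _) hnbig
    have h4 := (div_lt_iff₀ hδ).mp h1
    rw [div_lt_iff₀ hnpos]
    linarith
  rw [Real.dist_eq, abs_lt]
  constructor
  · linarith
  · linarith


/-! ### Measure-theoretic part -/

def Gset : Set (ℤ → ℤ) := {w | ∀ j : ℤ, w j = 1 ∨ w j = -1}

def Consist {n : ℕ} (ε : Fin n → ℤ) (b : Fin n → Fin 2) : Prop :=
  ∀ i i' : Fin n, pos' ε (i : ℕ) = pos' ε (i' : ℕ) → b i = b i'

lemma measurable_walk (k : ℤ) : Measurable fun w : ℤ → ℤ => walk w k := by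
  unfold walk
  split_ifs with h
  · exact Finset.measurable_sum _ fun j _ => measurable_pi_apply j
  · exact (Finset.measurable_sum _ fun j _ => measurable_pi_apply j).neg

lemma measurable_eval_walk {γ : Type*} [MeasurableSpace γ] (k : ℤ) :
    Measurable fun q : (ℤ → ℤ) × (ℤ → γ) => q.2 (walk q.1 k) := by
  intro s hs
  have hset : (fun q : (ℤ → ℤ) × (ℤ → γ) => q.2 (walk q.1 k)) ⁻¹' s
      = ⋃ z : ℤ, ((fun q : (ℤ → ℤ) × (ℤ → γ) => walk q.1 k) ⁻¹' {z})
          ∩ ((fun q : (ℤ → ℤ) × (ℤ → γ) => q.2 z) ⁻¹' s) := by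
    ext q
    simp only [Set.mem_preimage, Set.mem_iUnion, Set.mem_inter_iff, Set.mem_singleton_iff]
    constructor
    · intro h; exact ⟨walk q.1 k, rfl, h⟩
    · rintro ⟨z, hz, h⟩; rw [hz]; exact h
  rw [hset]
  exact MeasurableSet.iUnion fun z =>
    (((measurable_walk k).comp measurable_fst) (measurableSet_singleton z)).inter
      (((measurable_pi_apply z).comp measurable_snd) hs)

lemma measurable_kalikowPi {γ : Type*} [MeasurableSpace γ] :
    Measurable fun q : (ℤ → ℤ) × (ℤ → γ) => kalikowPi q.1 q.2 := by
  apply measurable_pi_lambda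
  intro k
  exact (((measurable_pi_apply k).comp measurable_fst)).prodMk (measurable_eval_walk k)

lemma measurableSet_wordCyl {γ : Type*} [MeasurableSpace γ] [MeasurableSingletonClass γ]
    {n : ℕ} (a : Fin n → γ) : MeasurableSet (wordCyl a) := by
  have : wordCyl a = ⋂ i : Fin n, (fun x : ℤ → γ => x ((i : ℕ) : ℤ)) ⁻¹' {a i} := by
    ext x; simp [wordCyl]
  rw [this]
  exact MeasurableSet.iInter fun i => (measurable_pi_apply _) (measurableSet_singleton _)

lemma measurable_Gset : MeasurableSet Gset := by
  have : Gset = ⋂ j : ℤ, (fun w : ℤ → ℤ => w j) ⁻¹' ({1, -1} : Set ℤ) := by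
    ext w; simp [Gset]
  rw [this]
  exact MeasurableSet.iInter fun j => (measurable_pi_apply j) .of_discrete

lemma measure_inter_full {α : Type*} [MeasurableSpace α] (μ : Measure α) (S Q : Set α)
    (hQ : μ Qᶜ = 0) : μ (S ∩ Q) = μ S := by
  refine le_antisymm (measure_mono Set.inter_subset_left) ?_
  calc μ S ≤ μ ((S ∩ Q) ∪ Qᶜ) := measure_mono (fun x hx => by
        by_cases h : x ∈ Q
        · exact Or.inl ⟨hx, h⟩
        · exact Or.inr h)
    _ ≤ μ (S ∩ Q) + μ Qᶜ := measure_union_le _ _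
    _ = μ (S ∩ Q) := by rw [hQ, add_zero]

lemma intSum (f : ℤ → ℤ) (k : ℕ) :
    ∑ j ∈ Finset.Ico (0:ℤ) (k:ℤ), f j = ∑ j ∈ Finset.range k, f (j : ℤ) := by
  have hset : Finset.Ico (0:ℤ) (k:ℤ)
      = (Finset.range k).map ⟨fun j : ℕ => (j:ℤ), fun a b h => by simpa using h⟩ := by
    ext z
    simp only [Finset.mem_Ico, Finset.mem_map, Finset.mem_range, Function.Embedding.coeFn_mk]
    constructor
    · rintro ⟨h0, hk⟩
      exact ⟨z.toNat, by omega, by show ((z.toNat : ℕ) : ℤ) = z; omega⟩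
    · rintro ⟨a, ha, rfl⟩
      constructor
      · show (0:ℤ) ≤ (a:ℤ); positivity
      · show (a:ℤ) < k; exact_mod_cast ha
  rw [hset, Finset.sum_map]
  rfl

lemma walk_eq_pos' {w : ℤ → ℤ} {n : ℕ} {ε : Fin n → ℤ}
    (h : ∀ i : Fin n, w ((i : ℕ) : ℤ) = ε i) (k : ℕ) (hk : k ≤ n) :
    walk w (k : ℤ) = pos' ε k := by
  rw [walk, if_pos (by positivity : (0:ℤ) ≤ (k:ℤ)), intSum]
  rw [pos']
  refine Finset.sum_congr rfl fun j hj => ?_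
  have hjk : j < k := Finset.mem_range.mp hj
  have hjn : j < n := lt_of_lt_of_le hjk hk
  rw [ext', dif_pos hjn]
  exact h ⟨j, hjn⟩


lemma ofReal_prod {α : Type*} (s : Finset α) (f : α → ℝ) (hf : ∀ i ∈ s, 0 ≤ f i) :
    ∏ i ∈ s, ENNReal.ofReal (f i) = ENNReal.ofReal (∏ i ∈ s, f i) := by
  classical
  induction s using Finset.induction with
  | empty => simp
  | insert _ _ hnotmem ih =>
    rename_i a s'
    rw [Finset.prod_insert hnotmem, Finset.prod_insert hnotmem,
      ENNReal.ofReal_mul (hf a (Finset.mem_insert_self a s')),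
      ih (fun i hi => hf i (Finset.mem_insert_of_mem hi))]

lemma Bp_compl_Gset (Bp : Measure (ℤ → ℤ)) [IsProbabilityMeasure Bp]
    (hBpsupp : Bp Gset = 1) : Bp Gsetᶜ = 0 := by
  have := measure_compl measurable_Gset (measure_ne_top Bp Gset)
  rw [hBpsupp, measure_univ] at this
  simpa using this

lemma prod_compl_zero (Bp : Measure (ℤ → ℤ)) (Bh : Measure (ℤ → Fin 2))
    [IsProbabilityMeasure Bp] [IsProbabilityMeasure Bh] (hBpsupp : Bp Gset = 1) :
    (Bp.prod Bh) ((Gset ×ˢ (Set.univ : Set (ℤ → Fin 2)))ᶜ) = 0 := by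
  have hc : (Gset ×ˢ (Set.univ : Set (ℤ → Fin 2)))ᶜ = Gsetᶜ ×ˢ (Set.univ : Set (ℤ → Fin 2)) := by
    ext q; simp [Set.mem_prod]
  rw [hc, Measure.prod_prod, Bp_compl_Gset Bp hBpsupp, zero_mul]

lemma map_cyl_invalid (Bp : Measure (ℤ → ℤ)) (Bh : Measure (ℤ → Fin 2))
    [IsProbabilityMeasure Bp] [IsProbabilityMeasure Bh] (hBpsupp : Bp Gset = 1)
    {n : ℕ} (a : Fin n → ℤ × Fin 2) (h : ¬ ∀ i : Fin n, (a i).1 = 1 ∨ (a i).1 = -1) :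
    ((Bp.prod Bh).map fun q : (ℤ → ℤ) × (ℤ → Fin 2) => kalikowPi q.1 q.2) (wordCyl a) = 0 := by
  rw [Measure.map_apply measurable_kalikowPi (measurableSet_wordCyl a)]
  push_neg at h
  obtain ⟨i, hi1, hi2⟩ := h
  have hsub : (fun q : (ℤ → ℤ) × (ℤ → Fin 2) => kalikowPi q.1 q.2) ⁻¹' wordCyl a
      ⊆ Gsetᶜ ×ˢ (Set.univ : Set (ℤ → Fin 2)) := by
    intro q hq
    have h1 : q.1 ((i:ℕ):ℤ) = (a i).1 := congrArg Prod.fst (hq i)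
    refine ⟨fun hG => ?_, trivial⟩
    rcases hG ((i:ℕ):ℤ) with h2 | h2 <;> rw [h1] at h2
    · exact hi1 h2
    · exact hi2 h2
  refine le_antisymm ?_ (zero_le)
  calc (Bp.prod Bh) _ ≤ (Bp.prod Bh) (Gsetᶜ ×ˢ (Set.univ : Set (ℤ → Fin 2))) :=
        measure_mono hsub
    _ = Bp Gsetᶜ * Bh Set.univ := Measure.prod_prod _ _
    _ = 0 := by rw [Bp_compl_Gset Bp hBpsupp, zero_mul]

lemma map_cyl_inconsist (Bp : Measure (ℤ → ℤ)) (Bh : Measure (ℤ → Fin 2))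
    [IsProbabilityMeasure Bp] [IsProbabilityMeasure Bh]
    {n : ℕ} (a : Fin n → ℤ × Fin 2)
    (h : ¬ Consist (fun i => (a i).1) (fun i => (a i).2)) :
    ((Bp.prod Bh).map fun q : (ℤ → ℤ) × (ℤ → Fin 2) => kalikowPi q.1 q.2) (wordCyl a) = 0 := by
  rw [Measure.map_apply measurable_kalikowPi (measurableSet_wordCyl a)]
  have : (fun q : (ℤ → ℤ) × (ℤ → Fin 2) => kalikowPi q.1 q.2) ⁻¹' wordCyl a = ∅ := by
    rw [Set.eq_empty_iff_forall_notMem]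
    intro q hq
    apply h
    intro i i' hpos
    have hfst : ∀ i : Fin n, q.1 ((i:ℕ):ℤ) = (a i).1 := fun i => congrArg Prod.fst (hq i)
    have hsnd : ∀ i : Fin n, q.2 (walk q.1 ((i:ℕ):ℤ)) = (a i).2 :=
      fun i => congrArg Prod.snd (hq i)
    have hw : ∀ i : Fin n, walk q.1 ((i:ℕ):ℤ) = pos' (fun i => (a i).1) ((i:ℕ)) :=
      fun i => walk_eq_pos' hfst (i:ℕ) (le_of_lt i.isLt)
    have e1 := hsnd i
    have e2 := hsnd i'
    rw [hw i, hpos, ← hw i'] at e1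
    rw [e2] at e1
    exact e1.symm
  rw [this]
  simp

lemma map_cyl_valid (p : ℝ) (hp0 : 0 < p) (hp1 : p < 1)
    (Bp : Measure (ℤ → ℤ)) (Bh : Measure (ℤ → Fin 2))
    [IsProbabilityMeasure Bp] [IsProbabilityMeasure Bh] (hBpsupp : Bp Gset = 1)
    (hBpcyl : ∀ (F : Finset ℤ) (a : ℤ → ℤ), (∀ j ∈ F, a j = 1 ∨ a j = -1) →
      Bp {w | ∀ j ∈ F, w j = a j} =
        ∏ j ∈ F, ENNReal.ofReal (if a j = 1 then p else 1 - p))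
    (hBhcyl : ∀ (F : Finset ℤ) (c : ℤ → Fin 2),
      Bh {y | ∀ j ∈ F, y j = c j} = (1 / 2 : ENNReal) ^ F.card)
    {n : ℕ} (a : Fin n → ℤ × Fin 2)
    (hval : ∀ i : Fin n, (a i).1 = 1 ∨ (a i).1 = -1)
    (hcons : Consist (fun i => (a i).1) (fun i => (a i).2)) :
    ((Bp.prod Bh).map fun q : (ℤ → ℤ) × (ℤ → Fin 2) => kalikowPi q.1 q.2) (wordCyl a)
      = ENNReal.ofReal (qw p (fun i => (a i).1))
        * (1/2 : ENNReal) ^ (Rng (fun i => (a i).1)) := by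
  classical
  set ε : Fin n → ℤ := fun i => (a i).1 with hε
  set b : Fin n → Fin 2 := fun i => (a i).2 with hb
  set Fz : Finset ℤ := (Finset.range n).image (fun k : ℕ => (k:ℤ)) with hFz
  set aw : ℤ → ℤ := fun z => if h : 0 ≤ z ∧ z.toNat < n then ε ⟨z.toNat, h.2⟩ else 1 with haw
  set cf : ℤ → Fin 2 :=
    fun s => if h : ∃ i : Fin n, pos' ε (i:ℕ) = s then b h.choose else 0 with hcf
  set A : Set (ℤ → ℤ) := {w | ∀ j ∈ Fz, w j = aw j} with hA
  set Bs : Set (ℤ → Fin 2) := {y | ∀ s ∈ sites ε, y s = cf s} with hBs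
  have haw_at : ∀ i : Fin n, aw ((i:ℕ):ℤ) = ε i := by
    intro i
    have h : (0:ℤ) ≤ ((i:ℕ):ℤ) ∧ (((i:ℕ):ℤ)).toNat < n := by
      refine ⟨by positivity, ?_⟩
      simp only [Int.toNat_natCast]
      exact i.isLt
    show (if h : (0:ℤ) ≤ ((i:ℕ):ℤ) ∧ (((i:ℕ):ℤ)).toNat < n
      then ε ⟨(((i:ℕ):ℤ)).toNat, h.2⟩ else 1) = ε i
    rw [dif_pos h]
    exact congrArg ε (Fin.ext (by simp))
  have hA_iff : ∀ w : ℤ → ℤ, w ∈ A ↔ ∀ i : Fin n, w ((i:ℕ):ℤ) = ε i := by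
    intro w
    constructor
    · intro hw i
      have hmem : ((i:ℕ):ℤ) ∈ Fz :=
        Finset.mem_image.mpr ⟨(i:ℕ), Finset.mem_range.mpr i.isLt, rfl⟩
      rw [hw _ hmem, haw_at]
    · intro hw j hj
      obtain ⟨k, hk, rfl⟩ := Finset.mem_image.mp hj
      have hkn := Finset.mem_range.mp hk
      have h1 := hw ⟨k, hkn⟩
      have h2 := haw_at ⟨k, hkn⟩
      exact h1.trans h2.symm
  have hsites : ∀ i : Fin n, pos' ε (i:ℕ) ∈ sites ε :=
    fun i => Finset.mem_image.mpr ⟨(i:ℕ), Finset.mem_range.mpr i.isLt, rfl⟩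
  have hkey : (fun q : (ℤ → ℤ) × (ℤ → Fin 2) => kalikowPi q.1 q.2) ⁻¹' wordCyl a
      ∩ (Gset ×ˢ (Set.univ : Set (ℤ → Fin 2))) = (A ∩ Gset) ×ˢ Bs := by
    ext q
    constructor
    · rintro ⟨hq, hG, -⟩
      have hfst : ∀ i : Fin n, q.1 ((i:ℕ):ℤ) = ε i := fun i => congrArg Prod.fst (hq i)
      have hsnd : ∀ i : Fin n, q.2 (walk q.1 ((i:ℕ):ℤ)) = b i :=
        fun i => congrArg Prod.snd (hq i)
      have hw : ∀ i : Fin n, walk q.1 ((i:ℕ):ℤ) = pos' ε (i:ℕ) :=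
        fun i => walk_eq_pos' hfst _ (le_of_lt i.isLt)
      refine ⟨⟨(hA_iff q.1).mpr hfst, hG⟩, ?_⟩
      intro s hs
      obtain ⟨k, hk, hpos⟩ := Finset.mem_image.mp hs
      have hkn := Finset.mem_range.mp hk
      have hpos0 : pos' ε ((⟨k, hkn⟩ : Fin n) : ℕ) = s := hpos
      have hex : ∃ i : Fin n, pos' ε (i:ℕ) = s := ⟨⟨k, hkn⟩, hpos0⟩
      have h1 : q.2 s = b ⟨k, hkn⟩ := by
        rw [← hpos0, ← hw ⟨k, hkn⟩]
        exact hsnd ⟨k, hkn⟩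
      have h2 : cf s = b hex.choose := by
        show (if h : ∃ i : Fin n, pos' ε (i:ℕ) = s then b h.choose else 0) = b hex.choose
        exact dif_pos hex
      have h3 : b hex.choose = b ⟨k, hkn⟩ :=
        hcons hex.choose ⟨k, hkn⟩ (hex.choose_spec.trans hpos0.symm)
      rw [h1, h2, h3]
    · rintro ⟨⟨hA', hG⟩, hBs'⟩
      have hfst := (hA_iff q.1).mp hA'
      have hw : ∀ i : Fin n, walk q.1 ((i:ℕ):ℤ) = pos' ε (i:ℕ) :=
        fun i => walk_eq_pos' hfst _ (le_of_lt i.isLt)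
      refine ⟨?_, hG, trivial⟩
      intro i
      have hex : ∃ i' : Fin n, pos' ε (i':ℕ) = pos' ε (i:ℕ) := ⟨i, rfl⟩
      have h2 : q.2 (walk q.1 ((i:ℕ):ℤ)) = b i := by
        rw [hw i, hBs' _ (hsites i)]
        show (if h : ∃ i' : Fin n, pos' ε (i':ℕ) = pos' ε (i:ℕ)
          then b h.choose else 0) = b i
        rw [dif_pos hex]
        exact hcons hex.choose i hex.choose_spec
      have h3 : kalikowPi q.1 q.2 ((i:ℕ):ℤ) = (q.1 ((i:ℕ):ℤ), q.2 (walk q.1 ((i:ℕ):ℤ))) := rfl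
      show kalikowPi q.1 q.2 ((i:ℕ):ℤ) = a i
      rw [h3, hfst i, h2]
  rw [Measure.map_apply measurable_kalikowPi (measurableSet_wordCyl a)]
  rw [← measure_inter_full (Bp.prod Bh) _ _ (prod_compl_zero Bp Bh hBpsupp), hkey,
    Measure.prod_prod]
  have hBpA : Bp (A ∩ Gset) = Bp A := measure_inter_full Bp A Gset (Bp_compl_Gset Bp hBpsupp)
  have hvalid : ∀ j ∈ Fz, aw j = 1 ∨ aw j = -1 := by
    intro j hj
    obtain ⟨k, hk, rfl⟩ := Finset.mem_image.mp hj
    have hkn := Finset.mem_range.mp hk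
    rw [haw_at ⟨k, hkn⟩]
    exact hval ⟨k, hkn⟩
  have hA_val : Bp A = ENNReal.ofReal (qw p ε) := by
    rw [hA]
    rw [hBpcyl Fz aw hvalid, hFz]
    rw [Finset.prod_image (by intro x _ y _ h; simpa using h)]
    rw [← Fin.prod_univ_eq_prod_range (fun k => ENNReal.ofReal (if aw (k:ℤ) = 1 then p else 1 - p)) n]
    have : ∀ i : Fin n, ENNReal.ofReal (if aw ((i:ℕ):ℤ) = 1 then p else 1 - p)
        = ENNReal.ofReal (wgt p (ε i)) := by
      intro i; rw [haw_at i]; rfl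
    rw [Finset.prod_congr rfl (fun i _ => this i)]
    rw [ofReal_prod _ _ (fun i _ => wgt_nonneg hp0 hp1 _)]
    rfl
  have hB_val : Bh Bs = (1/2 : ENNReal) ^ (Rng ε) := by
    rw [hBs, hBhcyl (sites ε) cf]
    rfl
  rw [hBpA, hA_val, hB_val]

lemma wgt_pos (hp0 : 0 < p) (hp1 : p < 1) (x : ℤ) : 0 < wgt p x := by
  unfold wgt; split <;> linarith

lemma qw_pos (hp0 : 0 < p) (hp1 : p < 1) (ε : Fin n → ℤ) : 0 < qw p ε :=
  Finset.prod_pos fun i _ => wgt_pos hp0 hp1 _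

lemma pos'_mem_sites (ε : Fin n → ℤ) (i : Fin n) : pos' ε (i:ℕ) ∈ sites ε :=
  Finset.mem_image.mpr ⟨(i:ℕ), Finset.mem_range.mpr i.isLt, rfl⟩

instance decConsist (ε : Fin n → ℤ) (b : Fin n → Fin 2) : Decidable (Consist ε b) :=
  inferInstanceAs (Decidable (∀ i i' : Fin n, pos' ε (i:ℕ) = pos' ε (i':ℕ) → b i = b i'))

lemma consist_card (ε : Fin n → ℤ) :
    (Finset.univ.filter (fun b : Fin n → Fin 2 => Consist ε b)).card = 2 ^ Rng ε := by
  classical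
  have hmem : ∀ s : {x // x ∈ sites ε}, ∃ i : Fin n, pos' ε (i:ℕ) = (s:ℤ) := by
    intro s
    obtain ⟨k, hk, hpos⟩ := Finset.mem_image.mp s.2
    exact ⟨⟨k, Finset.mem_range.mp hk⟩, hpos⟩
  choose idx hidx using hmem
  have h2 : 2 ^ Rng ε = Fintype.card ({x // x ∈ sites ε} → Fin 2) := by
    rw [Fintype.card_fun, Fintype.card_coe, Fintype.card_fin, Rng]
  rw [h2, ← Finset.card_univ]
  apply Finset.card_bij' (i := fun b _ => fun s : {x // x ∈ sites ε} => b (idx s))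
    (j := fun c _ => fun i : Fin n => c ⟨pos' ε (i:ℕ), pos'_mem_sites ε i⟩)
  · intro b hb
    exact Finset.mem_univ _
  · intro c hc
    rw [Finset.mem_filter]
    refine ⟨Finset.mem_univ _, ?_⟩
    intro i i' hpos
    show c ⟨pos' ε (i:ℕ), pos'_mem_sites ε i⟩ = c ⟨pos' ε (i':ℕ), pos'_mem_sites ε i'⟩
    exact congrArg c (Subtype.ext hpos)
  · intro b hb
    funext i0
    have hcons : Consist ε b := (Finset.mem_filter.mp hb).2
    exact hcons _ _ (hidx ⟨pos' ε (i0:ℕ), pos'_mem_sites ε i0⟩)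
  · intro c hc
    funext z
    exact congrArg c (Subtype.ext (hidx z))

lemma term_alg {q : ℝ} (hq : 0 < q) (R : ℕ) :
    (2:ℝ)^R * Real.negMulLog (q * (1/2:ℝ)^R)
      = q * (-Real.log q) + (R:ℝ) * Real.log 2 * q := by
  have h2 : (2:ℝ)^R * ((1/2:ℝ)^R) = 1 := by rw [← mul_pow]; norm_num
  rw [Real.negMulLog, Real.log_mul (ne_of_gt hq) (by positivity), Real.log_pow,
    one_div, Real.log_inv]
  push_cast
  linear_combination (-(q) * (Real.log q - (R:ℝ)*Real.log 2)) * h2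

lemma sum_entropy (hp0 : 0 < p) (hp1 : p < 1) :
    ∑ ε ∈ TT n, qw p ε * (-Real.log (qw p ε))
      = n * (-(p*Real.log p) - (1-p)*Real.log (1-p)) := by
  have hlog : ∀ ε : Fin n → ℤ,
      -Real.log (qw p ε) = ∑ i : Fin n, (-Real.log (wgt p (ε i))) := by
    intro ε
    rw [qw, Real.log_prod (fun i _ => ne_of_gt (wgt_pos hp0 hp1 _))]
    rw [← Finset.sum_neg_distrib]
  calc ∑ ε ∈ TT n, qw p ε * (-Real.log (qw p ε))
      = ∑ ε ∈ TT n, ∑ i : Fin n, qw p ε * (-Real.log (wgt p (ε i))) :=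
        Finset.sum_congr rfl fun ε _ => by rw [hlog, Finset.mul_sum]
    _ = ∑ i : Fin n, ∑ ε ∈ TT n, qw p ε * (-Real.log (wgt p (ε i))) := Finset.sum_comm
    _ = ∑ _i : Fin n, (p * (-Real.log p) + (1-p) * (-Real.log (1-p))) := by
        refine Finset.sum_congr rfl fun i _ => ?_
        have := E_single (p := p) i (fun x => -Real.log (wgt p x))
        rw [this, wgt_one, wgt_negone]
    _ = _ := by
        rw [Finset.sum_const, Finset.card_univ, Fintype.card_fin, nsmul_eq_mul]
        ring

lemma entropy_sum (hp0 : 0 < p) (hp1 : p < 1)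
    (Bp : Measure (ℤ → ℤ)) (Bh : Measure (ℤ → Fin 2))
    [IsProbabilityMeasure Bp] [IsProbabilityMeasure Bh] (hBpsupp : Bp Gset = 1)
    (hBpcyl : ∀ (F : Finset ℤ) (a : ℤ → ℤ), (∀ j ∈ F, a j = 1 ∨ a j = -1) →
      Bp {w | ∀ j ∈ F, w j = a j} =
        ∏ j ∈ F, ENNReal.ofReal (if a j = 1 then p else 1 - p))
    (hBhcyl : ∀ (F : Finset ℤ) (c : ℤ → Fin 2),
      Bh {y | ∀ j ∈ F, y j = c j} = (1 / 2 : ENNReal) ^ F.card)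
    (n : ℕ) :
    ∑' a : Fin n → ℤ × Fin 2,
      Real.negMulLog
        ((((Bp.prod Bh).map fun q : (ℤ → ℤ) × (ℤ → Fin 2) => kalikowPi q.1 q.2)
          (wordCyl a)).toReal)
      = n * (-(p * Real.log p) - (1-p) * Real.log (1-p)) + Real.log 2 * En p n := by
  classical
  set μm := (Bp.prod Bh).map fun q : (ℤ → ℤ) × (ℤ → Fin 2) => kalikowPi q.1 q.2 with hμm
  set f : (Fin n → ℤ × Fin 2) → ℝ := fun a => Real.negMulLog ((μm (wordCyl a)).toReal)
    with hf
  set TTf : Finset (Fin n → ℤ × Fin 2) :=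
    Fintype.piFinset (fun _ => ({1,-1} : Finset ℤ) ×ˢ (Finset.univ : Finset (Fin 2)))
    with hTTf
  have h0 : ∀ a ∉ TTf, f a = 0 := by
    intro a ha
    have hinv : ¬ ∀ i : Fin n, (a i).1 = 1 ∨ (a i).1 = -1 := by
      intro hcontra
      apply ha
      rw [hTTf, Fintype.mem_piFinset]
      intro i
      rw [Finset.mem_product]
      refine ⟨?_, Finset.mem_univ _⟩
      rcases hcontra i with h | h <;> simp [h]
    show Real.negMulLog ((μm (wordCyl a)).toReal) = 0
    rw [hμm, map_cyl_invalid Bp Bh hBpsupp a hinv]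
    simp
  rw [tsum_eq_sum h0]
  -- reindex as pairs
  have hpair : ∑ a ∈ TTf, f a
      = ∑ εb ∈ (TT n) ×ˢ (Finset.univ : Finset (Fin n → Fin 2)),
          f (fun i => (εb.1 i, εb.2 i)) := by
    apply Finset.sum_nbij' (i := fun a => ((fun i => (a i).1), (fun i => (a i).2)))
      (j := fun εb => fun i => (εb.1 i, εb.2 i))
    · intro a ha
      rw [Finset.mem_product]
      constructor
      · rw [mem_TT]
        intro i
        have := Fintype.mem_piFinset.mp ha i
        have h2 := (Finset.mem_product.mp this).1
        simpa using h2
      · exact Finset.mem_univ _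
    · intro εb hεb
      rw [hTTf, Fintype.mem_piFinset]
      intro i
      rw [Finset.mem_product]
      have h1 := (Finset.mem_product.mp hεb).1
      refine ⟨?_, Finset.mem_univ _⟩
      rcases mem_TT.mp h1 i with h | h <;> simp [h]
    · intro a ha
      funext i
      simp
    · intro εb hεb
      rfl
    · intro a ha
      rfl
  rw [hpair, Finset.sum_product]
  have hinner : ∀ ε ∈ TT n, ∑ b : Fin n → Fin 2, f (fun i => (ε i, b i))
      = (2:ℝ)^(Rng ε) * Real.negMulLog (qw p ε * (1/2:ℝ)^(Rng ε)) := by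
    intro ε hε
    have hval : ∀ i : Fin n, ε i = 1 ∨ ε i = -1 := mem_TT.mp hε
    have hterm : ∀ b : Fin n → Fin 2, f (fun i => (ε i, b i))
        = if Consist ε b then Real.negMulLog (qw p ε * (1/2:ℝ)^(Rng ε)) else 0 := by
      intro b
      have heq : μm (wordCyl (fun i => (ε i, b i)))
          = ((Bp.prod Bh).map fun q : (ℤ → ℤ) × (ℤ → Fin 2) => kalikowPi q.1 q.2)
            (wordCyl (fun i => (ε i, b i))) := by rw [hμm]
      by_cases hc : Consist ε b
      · rw [if_pos hc]
        show Real.negMulLog ((μm (wordCyl (fun i => (ε i, b i)))).toReal) = _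
        have heq2 : ((Bp.prod Bh).map fun q : (ℤ → ℤ) × (ℤ → Fin 2) => kalikowPi q.1 q.2)
            (wordCyl (fun i => (ε i, b i)))
            = ENNReal.ofReal (qw p ε) * (1/2 : ENNReal) ^ (Rng ε) :=
          map_cyl_valid p hp0 hp1 Bp Bh hBpsupp hBpcyl hBhcyl
            (fun i => (ε i, b i)) hval hc
        rw [heq, heq2, ENNReal.toReal_mul, ENNReal.toReal_pow,
          ENNReal.toReal_ofReal (le_of_lt (qw_pos hp0 hp1 ε))]
        norm_num
      · rw [if_neg hc]
        show Real.negMulLog ((μm (wordCyl (fun i => (ε i, b i)))).toReal) = 0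
        have heq0 : ((Bp.prod Bh).map fun q : (ℤ → ℤ) × (ℤ → Fin 2) => kalikowPi q.1 q.2)
            (wordCyl (fun i => (ε i, b i))) = 0 :=
          map_cyl_inconsist Bp Bh (fun i => (ε i, b i)) hc
        rw [heq, heq0]
        simp
    rw [Finset.sum_congr rfl fun b _ => hterm b]
    rw [Finset.sum_ite, Finset.sum_const, Finset.sum_const_zero, add_zero, nsmul_eq_mul]
    rw [consist_card ε]
    push_cast
    ring
  rw [Finset.sum_congr rfl hinner]
  have halg : ∀ ε ∈ TT n, (2:ℝ)^(Rng ε) * Real.negMulLog (qw p ε * (1/2:ℝ)^(Rng ε))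
      = qw p ε * (-Real.log (qw p ε)) + Real.log 2 * (qw p ε * (Rng ε : ℝ)) := by
    intro ε hε
    rw [term_alg (qw_pos hp0 hp1 ε) (Rng ε)]
    ring
  rw [Finset.sum_congr rfl halg, Finset.sum_add_distrib, sum_entropy hp0 hp1,
    ← Finset.mul_sum, En]

end

theorem kalikow_mu_p_entropy
    (p : ℝ) (hp0 : 0 < p) (hp1 : p < 1)
    (Bp : Measure (ℤ → ℤ)) (hBpP : IsProbabilityMeasure Bp)
    (hBpsupp : Bp {w | ∀ j : ℤ, w j = 1 ∨ w j = -1} = 1)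
    (hBpcyl : ∀ (F : Finset ℤ) (a : ℤ → ℤ), (∀ j ∈ F, a j = 1 ∨ a j = -1) →
      Bp {w | ∀ j ∈ F, w j = a j} =
        ∏ j ∈ F, ENNReal.ofReal (if a j = 1 then p else 1 - p))
    (Bh : Measure (ℤ → Fin 2)) (hBhP : IsProbabilityMeasure Bh)
    (hBhcyl : ∀ (F : Finset ℤ) (a : ℤ → Fin 2),
      Bh {y | ∀ j ∈ F, y j = a j} = (1 / 2 : ENNReal) ^ F.card) :
    Filter.Tendsto
      (fun n : ℕ =>
        (∑' a : Fin n → ℤ × Fin 2,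
          Real.negMulLog
            (((Bp.prod Bh).map fun q : (ℤ → ℤ) × (ℤ → Fin 2) => kalikowPi q.1 q.2)
              (wordCyl a)).toReal) / n)
      Filter.atTop
      (nhds (|2 * p - 1| * Real.log 2 +
        (-(p * Real.log p) - (1 - p) * Real.log (1 - p)))) := by
  haveI := hBpP
  haveI := hBhP
  have hGs : Bp Gset = 1 := hBpsupp
  have hsum := entropy_sum hp0 hp1 Bp Bh hGs hBpcyl hBhcyl
  set Hp : ℝ := -(p * Real.log p) - (1 - p) * Real.log (1 - p) with hHp
  have hEn := En_tendsto (p := p) hp0 hp1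
  have h1 : Filter.Tendsto (fun N : ℕ => Hp + Real.log 2 * (En p N / N)) Filter.atTop
      (nhds (Hp + Real.log 2 * |2*p-1|)) :=
    Filter.Tendsto.const_add Hp (hEn.const_mul (Real.log 2))
  have h2 : (fun N : ℕ => Hp + Real.log 2 * (En p N / N)) =ᶠ[Filter.atTop]
      (fun N : ℕ =>
        (∑' a : Fin N → ℤ × Fin 2,
          Real.negMulLog
            (((Bp.prod Bh).map fun q : (ℤ → ℤ) × (ℤ → Fin 2) => kalikowPi q.1 q.2)
              (wordCyl a)).toReal) / N) := by
    filter_upwards [Filter.eventually_ge_atTop 1] with N hN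
    rw [hsum N]
    have hN0 : (N:ℝ) ≠ 0 := by
      have h : (0:ℝ) < N := by exact_mod_cast (hN : 1 ≤ N)
      exact ne_of_gt h
    field_simp
  have h3 := Filter.Tendsto.congr' h2 h1
  have hv : |2 * p - 1| * Real.log 2 + Hp = Hp + Real.log 2 * |2*p-1| := by ring
  rw [hv]
  exact h3


end PaperStmt
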